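/- For every digraph D there exists a constant C_D > 0 such that for every nonzero restriction vector r, writing M = max_{v ∈ V(D)} r_v, we have max_{v ∈ V(D)} ( Σ_{u ∈ N^+(v)} r_u − Σ_{u ∈ N^-(v)} r_u ) ≤ S_D(r) ≤ max_{v ∈ V(D)} ( Σ_{u ∈ N^+(v)} r_u − Σ_{u ∈ N^-(v)} r_u ) + C_D · M^{2/3}. -/

import Mathlib

open Finset

/-- A digraph: finite vertex set, no loops, at most one arc per pair. -/
structure Digraph' (V : Type) where
  Adj : V → V → Bool
  irrefl : ∀ v, Adj v v = false
  asymm : ∀ u v, Adj u v = true → Adj v u = false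

namespace Digraph'

variable {V : Type} [Fintype V] [DecidableEq V] (D : Digraph' V)

/-- Out-neighborhood N⁺(v). -/
def outN (v : V) : Finset V := univ.filter fun u => D.Adj v u
/-- In-neighborhood N⁻(v). -/
def inN (v : V) : Finset V := univ.filter fun u => D.Adj u v

/-- max over vertices v of Σ_{u∈N⁺(v)} p u − Σ_{u∈N⁻(v)} p u. -/
noncomputable def payoff (p : V → ℝ) : ℝ :=
  sSup (Set.range fun v => (∑ u ∈ D.outN v, p u) - ∑ u ∈ D.inN v, p u)

/-- Auxiliary (fuel-indexed) definition of the value of the semi-restricted D-game. -/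
noncomputable def valueAux : ℕ → (V → ℕ) → ℝ
  | 0, _ => 0
  | (n+1), r =>
    if ∀ u, r u = 0 then 0
    else sInf { x : ℝ | ∃ p : V → ℝ, (∀ u, 0 ≤ p u) ∧ (∑ u, p u = 1) ∧
      (∀ u, p u ≠ 0 → r u ≠ 0) ∧
      x = D.payoff p + ∑ u, p u * valueAux n (fun w => r w - if w = u then 1 else 0) }

/-- The value S_D(r) of the semi-restricted D-game with restriction vector r. -/
noncomputable def value (r : V → ℕ) : ℝ := D.valueAux (∑ u, r u) r

end Digraph'

/-- A strategy for Rei in the semi-restricted D-game. -/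
structure ReiStrategy {V : Type} [Fintype V] [DecidableEq V] (D : Digraph' V) where
  play : (V → ℕ) → V → ℝ
  nonneg : ∀ r : V → ℕ, (¬ ∀ u, r u = 0) → ∀ u, 0 ≤ play r u
  sum_one : ∀ r : V → ℕ, (¬ ∀ u, r u = 0) → ∑ u, play r u = 1
  supp : ∀ r : V → ℕ, (¬ ∀ u, r u = 0) → ∀ u, play r u ≠ 0 → r u ≠ 0

namespace Digraph'

variable {V : Type} [Fintype V] [DecidableEq V] (D : Digraph' V)

/-- Auxiliary (fuel-indexed) value of Rei's strategy R. -/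
noncomputable def stratValueAux (R : ReiStrategy D) : ℕ → (V → ℕ) → ℝ
  | 0, _ => 0
  | (n+1), r =>
    if ∀ u, r u = 0 then 0
    else D.payoff (R.play r) +
      ∑ u, R.play r u * stratValueAux R n (fun w => r w - if w = u then 1 else 0)

/-- The value S_D(r; R) of Rei's strategy R at restriction vector r. -/
noncomputable def stratValue (R : ReiStrategy D) (r : V → ℕ) : ℝ :=
  D.stratValueAux R (∑ u, r u) r

/-- A strategy for Rei is optimal if its value equals the game value at every restriction vector. -/
def IsOptimal (R : ReiStrategy D) : Prop := ∀ r : V → ℕ, D.stratValue R r = D.value r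

/-- A strategy is oblivious if it only depends on the support of the restriction vector. -/
def IsOblivious (R : ReiStrategy D) : Prop :=
  ∀ r r' : V → ℕ, (∀ u, r u ≠ 0 ↔ r' u ≠ 0) → R.play r = R.play r'

/-- A digraph is oblivious if Rei has an oblivious optimal strategy. -/
def Oblivious : Prop := ∃ R : ReiStrategy D, D.IsOptimal R ∧ D.IsOblivious R

/-- A tournament: exactly one arc between any two distinct vertices. -/
def IsTournament : Prop := ∀ u v : V, u ≠ v → (D.Adj u v = true ∨ D.Adj v u = true)

/-- Eulerian: every vertex has equal in- and out-degree. -/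
def IsEulerian : Prop := ∀ v : V, (D.outN v).card = (D.inN v).card

/-- The skew adjacency matrix of a digraph. -/
def skewAdj : Matrix V V ℝ := fun u v =>
  if D.Adj u v then 1 else if D.Adj v u then -1 else 0

end Digraph'


set_option linter.unusedSectionVars false
set_option maxHeartbeats 2000000

namespace Digraph'

variable {V : Type} [Fintype V] [DecidableEq V] (D : Digraph' V)

noncomputable def mat (v u : V) : ℝ := (if D.Adj v u then 1 else 0) - (if D.Adj u v then 1 else 0)

lemma mat_antisymm (v u : V) : D.mat v u = - D.mat u v := by
  unfold mat; ring

lemma mat_abs_le (v u : V) : |D.mat v u| ≤ 1 := by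
  unfold mat
  rcases h1 : D.Adj v u <;> rcases h2 : D.Adj u v <;> simp_all <;> norm_num

noncomputable def score (r : V → ℝ) (v : V) : ℝ := ∑ u, D.mat v u * r u

lemma score_eq (r : V → ℝ) (v : V) :
    (∑ u ∈ D.outN v, r u) - ∑ u ∈ D.inN v, r u = D.score r v := by
  unfold outN inN score mat
  rw [Finset.sum_filter, Finset.sum_filter, ← Finset.sum_sub_distrib]
  congr 1; ext u
  by_cases h1 : D.Adj v u <;> by_cases h2 : D.Adj u v <;> simp [h1, h2] <;> ring

noncomputable def Phi (r : V → ℝ) : ℝ := sSup (Set.range (D.score r))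

lemma payoff_eq (p : V → ℝ) : D.payoff p = D.Phi p := by
  unfold payoff Phi
  congr 1; ext x
  constructor <;> rintro ⟨v, rfl⟩ <;> exact ⟨v, by rw [← score_eq]⟩

variable [Nonempty V]

lemma le_Phi (r : V → ℝ) (v : V) : D.score r v ≤ D.Phi r :=
  le_csSup (Set.finite_range _).bddAbove ⟨v, rfl⟩

lemma Phi_le {r : V → ℝ} {B : ℝ} (h : ∀ v, D.score r v ≤ B) : D.Phi r ≤ B :=
  csSup_le (Set.range_nonempty _) (by rintro x ⟨v, rfl⟩; exact h v)

lemma exists_Phi (r : V → ℝ) : ∃ v, D.Phi r = D.score r v := by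
  obtain ⟨v, -, hv⟩ := Finset.exists_max_image univ (D.score r) ⟨Classical.arbitrary V, mem_univ _⟩
  exact ⟨v, le_antisymm (D.Phi_le fun u => hv u (mem_univ u)) (D.le_Phi r v)⟩

lemma sum_score_self (p : V → ℝ) : ∑ v, p v * D.score p v = 0 := by
  have h : (∑ v, ∑ u, p v * (D.mat v u * p u)) = -(∑ v, ∑ u, p v * (D.mat v u * p u)) := by
    calc (∑ v, ∑ u, p v * (D.mat v u * p u)) = ∑ u, ∑ v, p v * (D.mat v u * p u) :=
          Finset.sum_comm
      _ = ∑ u, ∑ v, -(p u * (D.mat u v * p v)) := by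
          refine Finset.sum_congr rfl fun u _ => Finset.sum_congr rfl fun v _ => ?_
          rw [D.mat_antisymm u v]; ring
      _ = -(∑ v, ∑ u, p v * (D.mat v u * p u)) := by
          simp [Finset.sum_neg_distrib]
  have h2 : (∑ v, ∑ u, p v * (D.mat v u * p u)) = 0 := by linarith
  calc ∑ v, p v * D.score p v = ∑ v, ∑ u, p v * (D.mat v u * p u) := by
        refine Finset.sum_congr rfl fun v _ => ?_
        unfold score; rw [Finset.mul_sum]
    _ = 0 := h2

lemma Phi_nonneg {p : V → ℝ} (hp0 : ∀ u, 0 ≤ p u) (hp1 : ∑ u, p u = 1) : 0 ≤ D.Phi p := by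
  have h1 : ∑ v, p v * D.score p v ≤ ∑ v, p v * D.Phi p :=
    Finset.sum_le_sum fun v _ => mul_le_mul_of_nonneg_left (D.le_Phi p v) (hp0 v)
  rw [D.sum_score_self, ← Finset.sum_mul, hp1, one_mul] at h1
  exact h1

lemma score_abs_le {p : V → ℝ} (hp0 : ∀ u, 0 ≤ p u) (hp1 : ∑ u, p u = 1) (v : V) :
    |D.score p v| ≤ 1 := by
  unfold score
  calc |∑ u, D.mat v u * p u| ≤ ∑ u, |D.mat v u * p u| := Finset.abs_sum_le_sum_abs _ _
    _ ≤ ∑ u, p u := Finset.sum_le_sum fun u _ => by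
        rw [abs_mul, abs_of_nonneg (hp0 u)]
        exact mul_le_of_le_one_left (hp0 u) (D.mat_abs_le v u)
    _ = 1 := hp1

lemma Phi_le_one {p : V → ℝ} (hp0 : ∀ u, 0 ≤ p u) (hp1 : ∑ u, p u = 1) : D.Phi p ≤ 1 :=
  D.Phi_le fun v => (abs_le.mp (D.score_abs_le hp0 hp1 v)).2


/-- the defining set -/
def Sset (n : ℕ) (r : V → ℕ) : Set ℝ :=
  { x : ℝ | ∃ p : V → ℝ, (∀ u, 0 ≤ p u) ∧ (∑ u, p u = 1) ∧
      (∀ u, p u ≠ 0 → r u ≠ 0) ∧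
      x = D.payoff p + ∑ u, p u * D.valueAux n (fun w => r w - if w = u then 1 else 0) }

lemma valueAux_succ (n : ℕ) (r : V → ℕ) (h : ¬ ∀ u, r u = 0) :
    D.valueAux (n+1) r = sInf (D.Sset n r) := by
  rw [valueAux, if_neg h]; rfl

lemma cast_delta {r : V → ℕ} {u : V} (hu : r u ≠ 0) :
    (fun w => ((r w - if w = u then 1 else 0 : ℕ) : ℝ))
      = fun w => (r w : ℝ) - (if w = u then 1 else 0) := by
  funext w
  by_cases h : w = u
  · subst h
    simp only [if_pos rfl, if_true]
    rw [Nat.cast_sub (Nat.one_le_iff_ne_zero.mpr hu), Nat.cast_one]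
  · simp [h]

lemma sum_delta {r : V → ℕ} {u : V} (hu : r u ≠ 0) :
    ∑ w, (r w - if w = u then 1 else 0) = (∑ w, r w) - 1 := by
  have h1 : ∑ w, (r w - if w = u then 1 else 0)
      = (r u - 1) + ∑ w ∈ univ.erase u, (r w - if w = u then 1 else 0) := by
    rw [← Finset.add_sum_erase _ _ (mem_univ u)]
    simp
  have h3 : ∑ w ∈ univ.erase u, (r w - if w = u then 1 else 0) = ∑ w ∈ univ.erase u, r w := by
    refine Finset.sum_congr rfl fun w hw => ?_
    simp [Finset.ne_of_mem_erase hw]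
  have h2 : ∑ w, r w = r u + ∑ w ∈ univ.erase u, r w :=
    (Finset.add_sum_erase _ _ (mem_univ u)).symm
  have h4 : 1 ≤ r u := Nat.one_le_iff_ne_zero.mpr hu
  omega

lemma score_delta {r : V → ℕ} {u : V} (hu : r u ≠ 0) (v : V) :
    D.score (fun w => ((r w - if w = u then 1 else 0 : ℕ) : ℝ)) v
      = D.score (fun w => (r w : ℝ)) v - D.mat v u := by
  rw [cast_delta hu]
  unfold score
  simp only [mul_sub, Finset.sum_sub_distrib]
  congr 1
  simp [mul_ite]

lemma Sset_nonempty (n : ℕ) (r : V → ℕ) (h : ¬ ∀ u, r u = 0) : (D.Sset n r).Nonempty := by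
  push_neg at h
  obtain ⟨u₀, hu⟩ := h
  refine ⟨_, (fun u => if u = u₀ then (1:ℝ) else 0), fun u => ?_, by simp, fun u hp => ?_, rfl⟩
  · by_cases h : u = u₀ <;> simp [h]
  · by_cases h : u = u₀
    · subst h; exact hu
    · simp [h] at hp


lemma valueAux_bounds (n : ℕ) : ∀ r : V → ℕ, -(n:ℝ) ≤ D.valueAux n r ∧ D.valueAux n r ≤ n := by
  induction n with
  | zero => intro r; rw [valueAux]; norm_num
  | succ n ih =>
    intro r
    by_cases h : ∀ u, r u = 0
    · rw [valueAux, if_pos h]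
      constructor
      · simp only [neg_nonpos]; positivity
      · positivity
    · rw [D.valueAux_succ n r h]
      have hlb : ∀ x ∈ D.Sset n r, -((n:ℝ)+1) ≤ x := by
        rintro x ⟨p, hp0, hp1, hps, rfl⟩
        have h1 : (0:ℝ) ≤ D.payoff p := by rw [D.payoff_eq]; exact D.Phi_nonneg hp0 hp1
        have h2 : -(n:ℝ) ≤ ∑ u, p u * D.valueAux n (fun w => r w - if w = u then 1 else 0) := by
          calc -(n:ℝ) = ∑ u, p u * (-(n:ℝ)) := by rw [← Finset.sum_mul, hp1, one_mul]
            _ ≤ _ := Finset.sum_le_sum fun u _ => mul_le_mul_of_nonneg_left (ih _).1 (hp0 u)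
        linarith
      constructor
      · push_cast
        exact le_csInf (D.Sset_nonempty n r h) hlb
      · obtain ⟨x, hx⟩ := D.Sset_nonempty n r h
        refine le_trans (csInf_le ⟨-((n:ℝ)+1), hlb⟩ hx) ?_
        obtain ⟨p, hp0, hp1, hps, rfl⟩ := hx
        have h1 : D.payoff p ≤ 1 := by rw [D.payoff_eq]; exact D.Phi_le_one hp0 hp1
        have h2 : ∑ u, p u * D.valueAux n (fun w => r w - if w = u then 1 else 0) ≤ (n:ℝ) := by
          calc ∑ u, p u * D.valueAux n (fun w => r w - if w = u then 1 else 0)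
              ≤ ∑ u, p u * (n:ℝ) :=
                Finset.sum_le_sum fun u _ => mul_le_mul_of_nonneg_left (ih _).2 (hp0 u)
            _ = (n:ℝ) := by rw [← Finset.sum_mul, hp1, one_mul]
        push_cast
        linarith

lemma Sset_bddBelow (n : ℕ) (r : V → ℕ) : BddBelow (D.Sset n r) := by
  refine ⟨-((n:ℝ)+1), ?_⟩
  rintro x ⟨p, hp0, hp1, hps, rfl⟩
  have h1 : (0:ℝ) ≤ D.payoff p := by rw [D.payoff_eq]; exact D.Phi_nonneg hp0 hp1
  have h2 : -(n:ℝ) ≤ ∑ u, p u * D.valueAux n (fun w => r w - if w = u then 1 else 0) := by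
    calc -(n:ℝ) = ∑ u, p u * (-(n:ℝ)) := by rw [← Finset.sum_mul, hp1, one_mul]
      _ ≤ _ := Finset.sum_le_sum fun u _ =>
          mul_le_mul_of_nonneg_left (D.valueAux_bounds n _).1 (hp0 u)
  linarith

lemma Phi_cast_le_valueAux : ∀ (n : ℕ) (r : V → ℕ), (∑ u, r u) = n →
    D.Phi (fun u => (r u : ℝ)) ≤ D.valueAux n r := by
  intro n
  induction n with
  | zero =>
    intro r hr
    have h0 : ∀ u, r u = 0 := fun u =>
      Finset.sum_eq_zero_iff.mp hr u (mem_univ u)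
    rw [valueAux]
    exact D.Phi_le fun v => by simp [score, h0]
  | succ n ih =>
    intro r hr
    have h : ¬ ∀ u, r u = 0 := by intro hz; simp [hz] at hr
    rw [D.valueAux_succ n r h]
    refine le_csInf (D.Sset_nonempty n r h) ?_
    rintro x ⟨p, hp0, hp1, hps, rfl⟩
    refine D.Phi_le fun v => ?_
    have key : ∀ u, p u * (D.score (fun w => (r w : ℝ)) v - D.mat v u)
        ≤ p u * D.valueAux n (fun w => r w - if w = u then 1 else 0) := by
      intro u
      by_cases hpu : p u = 0
      · rw [hpu]; simp
      · have hru := hps u hpu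
        have h1 := ih _ (by rw [sum_delta hru, hr]; omega)
        have h3 : D.score (fun w => ((r w - if w = u then 1 else 0 : ℕ) : ℝ)) v
            ≤ D.valueAux n (fun w => r w - if w = u then 1 else 0) :=
          le_trans (D.le_Phi _ v) h1
        rw [← D.score_delta hru v]
        exact mul_le_mul_of_nonneg_left h3 (hp0 u)
    have hsumkey : ∑ u, p u * (D.score (fun w => (r w : ℝ)) v - D.mat v u)
        ≤ ∑ u, p u * D.valueAux n (fun w => r w - if w = u then 1 else 0) :=
      Finset.sum_le_sum fun u _ => key u
    have hexp : ∑ u, p u * (D.score (fun w => (r w : ℝ)) v - D.mat v u)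
        = D.score (fun w => (r w : ℝ)) v - D.score p v := by
      simp only [mul_sub, Finset.sum_sub_distrib, ← Finset.sum_mul, hp1, one_mul]
      congr 1
      exact Finset.sum_congr rfl fun u _ => mul_comm _ _
    rw [hexp] at hsumkey
    have hpay : D.score p v ≤ D.payoff p := by rw [D.payoff_eq]; exact D.le_Phi p v
    linarith


lemma exp_quad {x : ℝ} (h : |x| ≤ 1) : Real.exp x ≤ 1 + x + x^2 := by
  have h2 := Real.exp_bound h (n := 2) (by norm_num)
  have h3 : ∑ m ∈ Finset.range 2, x ^ m / (m.factorial : ℝ) = 1 + x := by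
    simp [Finset.sum_range_succ]
  rw [h3] at h2
  have h4 := (abs_le.mp h2).2
  have h5 : |x|^2 = x^2 := sq_abs x
  norm_num at h4
  nlinarith [sq_nonneg x]

lemma t_exp_le {lam t : ℝ} (hl : 0 < lam) (ht : 0 ≤ t) :
    t * Real.exp (-(lam*t)) ≤ 1/lam := by
  have h := Real.add_one_le_exp (lam*t)
  rw [Real.exp_neg, ← div_eq_mul_inv, div_le_div_iff₀ (Real.exp_pos _) hl]
  nlinarith

lemma log_sub_log {n : ℕ} (hn : 0 < n) :
    1/((n:ℝ)+1) ≤ Real.log ((n:ℝ)+1) - Real.log n := by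
  have hn' : (0:ℝ) < n := by exact_mod_cast hn
  have h := Real.log_le_sub_one_of_pos (x := (n:ℝ)/((n:ℝ)+1)) (by positivity)
  rw [Real.log_div hn'.ne' (by positivity)] at h
  have h2 : (n:ℝ)/((n:ℝ)+1) - 1 = -(1/((n:ℝ)+1)) := by field_simp; ring
  linarith

lemma jensen_log {V : Type} [Fintype V] {p X : V → ℝ} (hp0 : ∀ u, 0 ≤ p u)
    (hp1 : ∑ u, p u = 1) (hX : ∀ u, 0 < X u) :
    ∑ u, p u * Real.log (X u) ≤ Real.log (∑ u, p u * X u) := by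
  have h := (strictConcaveOn_log_Ioi.concaveOn).le_map_sum (t := univ) (w := p) (p := X)
    (fun u _ => hp0 u) hp1 (fun u _ => hX u)
  simpa [smul_eq_mul] using h

noncomputable def Psi (lam : ℝ) (r : V → ℝ) : ℝ :=
  Real.log (∑ v, Real.exp (lam * D.score r v))

lemma exp_Phi_le (lam : ℝ) (r : V → ℝ) :
    Real.exp (lam * D.Phi r) ≤ ∑ v, Real.exp (lam * D.score r v) := by
  obtain ⟨v, hv⟩ := D.exists_Phi r
  rw [hv]
  exact Finset.single_le_sum (f := fun v => Real.exp (lam * D.score r v))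
    (fun u _ => (Real.exp_pos _).le) (mem_univ v)

lemma sum_w_diff_le (lam : ℝ) (hl : 0 < lam) (r : V → ℝ) :
    ∑ v, Real.exp (lam * D.score r v) * (D.Phi r - D.score r v)
      ≤ (Fintype.card V : ℝ) * ((∑ v, Real.exp (lam * D.score r v)) / lam) := by
  have key : ∀ v, Real.exp (lam * D.score r v) * (D.Phi r - D.score r v)
      ≤ (∑ v, Real.exp (lam * D.score r v)) / lam := by
    intro v
    have ht : 0 ≤ D.Phi r - D.score r v := sub_nonneg.mpr (D.le_Phi r v)
    have h1 : Real.exp (lam * D.score r v)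
        = Real.exp (lam * D.Phi r) * Real.exp (-(lam * (D.Phi r - D.score r v))) := by
      rw [← Real.exp_add]; ring_nf
    calc Real.exp (lam * D.score r v) * (D.Phi r - D.score r v)
        = Real.exp (lam * D.Phi r)
          * ((D.Phi r - D.score r v) * Real.exp (-(lam * (D.Phi r - D.score r v)))) := by
          rw [h1]; ring
      _ ≤ Real.exp (lam * D.Phi r) * (1/lam) :=
          mul_le_mul_of_nonneg_left (t_exp_le hl ht) (Real.exp_pos _).le
      _ ≤ (∑ v, Real.exp (lam * D.score r v)) * (1/lam) :=
          mul_le_mul_of_nonneg_right (D.exp_Phi_le lam r) (by positivity)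
      _ = (∑ v, Real.exp (lam * D.score r v)) / lam := by ring
  calc ∑ v, Real.exp (lam * D.score r v) * (D.Phi r - D.score r v)
      ≤ ∑ _v : V, (∑ v, Real.exp (lam * D.score r v)) / lam :=
        Finset.sum_le_sum fun v _ => key v
    _ = (Fintype.card V : ℝ) * ((∑ v, Real.exp (lam * D.score r v)) / lam) := by
        rw [Finset.sum_const, card_univ, nsmul_eq_mul]


lemma valueAux_le (lam : ℝ) (hl0 : 0 < lam) (hl1 : lam ≤ 1) :
    ∀ (n : ℕ) (r : V → ℕ), (∑ u, r u) = n →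
    D.valueAux n r ≤ D.Psi lam (fun u => (r u : ℝ)) / lam
      + (lam * n + ((Fintype.card V : ℝ)/lam) * (if n = 0 then 0 else 1 + Real.log n)) := by
  intro n
  induction n with
  | zero =>
    intro r hr
    rw [valueAux]
    simp only [if_pos rfl, Nat.cast_zero, mul_zero, add_zero]
    have h0 : ∀ u, r u = 0 := fun u => Finset.sum_eq_zero_iff.mp hr u (mem_univ u)
    have hPsi : D.Psi lam (fun u => (r u:ℝ)) = Real.log (Fintype.card V) := by
      unfold Psi
      simp [score, h0]
    have hlog : 0 ≤ Real.log (Fintype.card V) :=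
      Real.log_nonneg (by exact_mod_cast Fintype.card_pos (α := V))
    rw [hPsi]
    positivity
  | succ n ih =>
    intro r hr
    have h : ¬ ∀ u, r u = 0 := by intro hz; simp [hz] at hr
    rw [D.valueAux_succ n r h]
    have hNpos : (0:ℝ) < (Fintype.card V : ℝ) := by exact_mod_cast Fintype.card_pos (α := V)
    set N : ℝ := (Fintype.card V : ℝ) with hN
    have hTpos : (0:ℝ) < (n:ℝ) + 1 := by positivity
    set T : ℝ := (n:ℝ) + 1 with hT
    have hcast : ∑ u, ((r u : ℝ)) = T := by
      rw [← Nat.cast_sum, hr]; push_cast; rfl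
    set p : V → ℝ := fun u => (r u : ℝ) / T with hp
    have hp0 : ∀ u, 0 ≤ p u := fun u => by
      have : (0:ℝ) ≤ (r u : ℝ) := Nat.cast_nonneg _
      exact div_nonneg this hTpos.le
    have hp1 : ∑ u, p u = 1 := by
      simp only [hp]
      rw [← Finset.sum_div, hcast, div_self hTpos.ne']
    have hps : ∀ u, p u ≠ 0 → r u ≠ 0 := by
      intro u hpu h0
      exact hpu (by simp [hp, h0])
    have hmem : D.payoff p + ∑ u, p u * D.valueAux n (fun w => r w - if w = u then 1 else 0)
        ∈ D.Sset n r := ⟨p, hp0, hp1, hps, rfl⟩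
    refine le_trans (csInf_le (D.Sset_bddBelow n r) hmem) ?_
    set f : V → ℝ := D.score (fun u => (r u:ℝ)) with hf
    set Φ : ℝ := D.Phi (fun u => (r u:ℝ)) with hPhi
    set w : V → ℝ := fun v => Real.exp (lam * f v) with hw
    set W : ℝ := ∑ v, w v with hW
    have hWpos : 0 < W :=
      Finset.sum_pos (fun v _ => Real.exp_pos _) univ_nonempty
    have hPsir : D.Psi lam (fun u => (r u:ℝ)) = Real.log W := rfl
    -- payoff bound
    have hpay : D.payoff p ≤ Φ / T := by
      rw [D.payoff_eq]
      refine D.Phi_le fun v => ?_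
      have hsc : D.score p v = f v / T := by
        simp only [hp, hf, score, Finset.sum_div]
        exact Finset.sum_congr rfl fun u _ => by ring
      rw [hsc]
      have := D.le_Phi (fun u => (r u:ℝ)) v
      rw [← hf, ← hPhi] at this
      exact (div_le_div_iff_of_pos_right hTpos).mpr this
    -- IH on steps
    set G : ℝ := lam * n + (N/lam) * (if n = 0 then 0 else 1 + Real.log n) with hG
    have hstep : ∑ u, p u * D.valueAux n (fun w' => r w' - if w' = u then 1 else 0)
        ≤ ∑ u, p u * (D.Psi lam (fun w' => ((r w' - if w' = u then 1 else 0 : ℕ):ℝ)) / lam + G) := by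
      refine Finset.sum_le_sum fun u _ => ?_
      by_cases hpu : p u = 0
      · rw [hpu]; simp
      · exact mul_le_mul_of_nonneg_left
          (ih _ (by rw [sum_delta (hps u hpu), hr]; omega)) (hp0 u)
    set X : V → ℝ := fun u =>
      ∑ v, Real.exp (lam * D.score (fun w' => ((r w' - if w' = u then 1 else 0 : ℕ):ℝ)) v) with hX
    have hXpos : ∀ u, 0 < X u := fun u =>
      Finset.sum_pos (fun v _ => Real.exp_pos _) univ_nonempty
    have hPsiu : ∀ u, D.Psi lam (fun w' => ((r w' - if w' = u then 1 else 0 : ℕ):ℝ))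
        = Real.log (X u) := fun u => rfl
    have hsplit : ∑ u, p u * (D.Psi lam (fun w' => ((r w' - if w' = u then 1 else 0 : ℕ):ℝ)) / lam + G)
        = (∑ u, p u * Real.log (X u)) / lam + G := by
      simp only [hPsiu, mul_add, Finset.sum_add_distrib, ← Finset.sum_mul, hp1, one_mul,
        Finset.sum_div]
      congr 1
      · exact Finset.sum_congr rfl fun u _ => by ring
    -- Jensen
    have hjen : ∑ u, p u * Real.log (X u) ≤ Real.log (∑ u, p u * X u) :=
      jensen_log hp0 hp1 hXpos
    -- X u ≤ linearized
    have hXY : ∀ u, p u * X u ≤ p u * ((1 + lam^2) * W - lam * ∑ v, w v * D.mat v u) := by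
      intro u
      by_cases hpu : p u = 0
      · rw [hpu]; simp
      · have hru := hps u hpu
        refine mul_le_mul_of_nonneg_left ?_ (hp0 u)
        have h1 : X u = ∑ v, w v * Real.exp (-(lam * D.mat v u)) := by
          refine Finset.sum_congr rfl fun v _ => ?_
          rw [D.score_delta hru v, ← hf, hw]
          rw [← Real.exp_add]
          congr 1
          ring
        rw [h1]
        have h2 : ∀ v, w v * Real.exp (-(lam * D.mat v u)) ≤ w v * (1 - lam * D.mat v u + lam^2) := by
          intro v
          refine mul_le_mul_of_nonneg_left ?_ (Real.exp_pos _).le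
          have habs : |(-(lam * D.mat v u))| ≤ 1 := by
            rw [abs_neg, abs_mul, abs_of_pos hl0]
            exact mul_le_one₀ hl1 (abs_nonneg _) (D.mat_abs_le v u)
          have h3 := exp_quad habs
          have h4 : |D.mat v u| ≤ 1 := D.mat_abs_le v u
          have h5 : (D.mat v u)^2 ≤ 1 := by
            rw [← sq_abs]; nlinarith [abs_nonneg (D.mat v u)]
          nlinarith [sq_nonneg lam, sq_nonneg (D.mat v u), mul_pos hl0 hl0]
        calc ∑ v, w v * Real.exp (-(lam * D.mat v u))
            ≤ ∑ v, w v * (1 - lam * D.mat v u + lam^2) := Finset.sum_le_sum fun v _ => h2 v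
          _ = (1 + lam^2) * W - lam * ∑ v, w v * D.mat v u := by
              rw [hW, Finset.mul_sum, Finset.mul_sum, ← Finset.sum_sub_distrib]
              exact Finset.sum_congr rfl fun v _ => by ring
    -- sum over u
    have hswap : ∑ u, p u * (lam * ∑ v, w v * D.mat v u)
        = (lam/T) * ∑ v, w v * f v := by
      have h1 : ∀ v, ∑ u, D.mat v u * p u = f v / T := by
        intro v
        have : D.score p v = f v / T := by
          simp only [hp, hf, score, Finset.sum_div]
          exact Finset.sum_congr rfl fun u _ => by ring
        rw [← this]; rfl
      calc ∑ u, p u * (lam * ∑ v, w v * D.mat v u)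
          = lam * ∑ u, ∑ v, (w v * D.mat v u) * p u := by
            rw [Finset.mul_sum]
            refine Finset.sum_congr rfl fun u _ => ?_
            rw [← Finset.sum_mul]
            ring
        _ = lam * ∑ v, ∑ u, (w v * D.mat v u) * p u := by rw [Finset.sum_comm]
        _ = lam * ∑ v, w v * (f v / T) := by
            congr 1
            refine Finset.sum_congr rfl fun v _ => ?_
            rw [← h1 v, Finset.mul_sum]
            exact Finset.sum_congr rfl fun u _ => by ring
        _ = (lam/T) * ∑ v, w v * f v := by
            rw [Finset.mul_sum, Finset.mul_sum]
            exact Finset.sum_congr rfl fun v _ => by ring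
    have hsum : ∑ u, p u * X u ≤ (1 + lam^2) * W - (lam/T) * ∑ v, w v * f v := by
      calc ∑ u, p u * X u
          ≤ ∑ u, p u * ((1 + lam^2) * W - lam * ∑ v, w v * D.mat v u) :=
            Finset.sum_le_sum fun u _ => hXY u
        _ = (∑ u, p u) * ((1 + lam^2) * W) - ∑ u, p u * (lam * ∑ v, w v * D.mat v u) := by
            simp only [mul_sub, Finset.sum_sub_distrib, Finset.sum_mul]
        _ = (1 + lam^2) * W - (lam/T) * ∑ v, w v * f v := by rw [hp1, one_mul, hswap]
    -- lower bound on Σ w f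
    have havg : W * Φ - N * (W / lam) ≤ ∑ v, w v * f v := by
      have h1 := D.sum_w_diff_le lam hl0 (fun u => (r u:ℝ))
      rw [← hf, ← hPhi] at h1
      have h2 : ∑ v, Real.exp (lam * f v) * (Φ - f v) = W * Φ - ∑ v, w v * f v := by
        rw [hW, Finset.sum_mul, ← Finset.sum_sub_distrib]
        exact Finset.sum_congr rfl fun v _ => by rw [hw]; ring
      rw [h2] at h1
      rw [← hW, ← hN] at h1
      linarith
    have hPhiT : Φ ≤ T := by
      rw [hPhi, ← hcast]
      refine D.Phi_le fun v => ?_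
      unfold score
      refine Finset.sum_le_sum fun u _ => ?_
      have h1 : D.mat v u ≤ 1 := (abs_le.mp (D.mat_abs_le v u)).2
      have h2 : (0:ℝ) ≤ (r u : ℝ) := Nat.cast_nonneg _
      nlinarith
    have hB : ∑ u, p u * X u ≤ W * (1 + lam^2 - lam*Φ/T + N/T) := by
      have h1 : (lam/T) * (W * Φ - N * (W / lam)) ≤ (lam/T) * ∑ v, w v * f v :=
        mul_le_mul_of_nonneg_left havg (by positivity)
      have h2 : (lam/T) * (W * Φ - N * (W / lam)) = W * (lam*Φ/T) - W * (N/T) := by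
        field_simp
      have h3 : W * (1 + lam^2 - lam*Φ/T + N/T)
          = (1 + lam^2) * W - (W * (lam*Φ/T) - W * (N/T)) := by ring
      rw [h3]
      linarith [hsum]
    have hBpos : 0 < 1 + lam^2 - lam*Φ/T + N/T := by
      rcases le_or_gt 0 Φ with hc | hc
      · have h1 : lam * Φ ≤ Φ := by nlinarith
        have h2 : lam*Φ/T ≤ 1 := by
          rw [div_le_one hTpos]; linarith
        have : 0 < N/T := by positivity
        nlinarith [sq_nonneg lam]
      · have h1 : 0 < -(lam*Φ/T) := by
          have : lam * Φ < 0 := mul_neg_of_pos_of_neg hl0 hc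
          have := div_neg_of_neg_of_pos this hTpos
          linarith
        have : 0 < N/T := by positivity
        nlinarith [sq_nonneg lam]
    have hppos : 0 < ∑ u, p u * X u := by
      have hne : (∑ u, p u) ≠ 0 := by rw [hp1]; exact one_ne_zero
      obtain ⟨u₀, -, hu₀⟩ := Finset.exists_ne_zero_of_sum_ne_zero hne
      refine Finset.sum_pos' (fun u _ => mul_nonneg (hp0 u) (hXpos u).le) ⟨u₀, mem_univ u₀, ?_⟩
      exact mul_pos (lt_of_le_of_ne (hp0 u₀) (Ne.symm hu₀)) (hXpos u₀)
    have hlog : Real.log (∑ u, p u * X u) ≤ Real.log W + (lam^2 - lam*Φ/T + N/T) := by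
      calc Real.log (∑ u, p u * X u)
          ≤ Real.log (W * (1 + lam^2 - lam*Φ/T + N/T)) := Real.log_le_log hppos hB
        _ = Real.log W + Real.log (1 + lam^2 - lam*Φ/T + N/T) := Real.log_mul hWpos.ne' hBpos.ne'
        _ ≤ Real.log W + (lam^2 - lam*Φ/T + N/T) := by
            have := Real.log_le_sub_one_of_pos hBpos
            linarith
    -- combine
    have hS1 : ∑ u, p u * D.valueAux n (fun w' => r w' - if w' = u then 1 else 0)
        ≤ (Real.log W + (lam^2 - lam*Φ/T + N/T))/lam + G := by
      have h1 : (∑ u, p u * Real.log (X u)) / lam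
          ≤ (Real.log W + (lam^2 - lam*Φ/T + N/T))/lam := by
        exact (div_le_div_iff_of_pos_right hl0).mpr (le_trans hjen hlog)
      calc ∑ u, p u * D.valueAux n (fun w' => r w' - if w' = u then 1 else 0)
          ≤ (∑ u, p u * Real.log (X u)) / lam + G := by rw [← hsplit]; exact hstep
        _ ≤ (Real.log W + (lam^2 - lam*Φ/T + N/T))/lam + G := by linarith
    have hexpand : (Real.log W + (lam^2 - lam*Φ/T + N/T))/lam
        = Real.log W/lam + lam - Φ/T + N/(lam*T) := by
      field_simp
      ring
    have hGstep : lam + N/(lam*T) + G ≤ lam*((n:ℝ)+1) + (N/lam) * (1 + Real.log ((n:ℝ)+1)) := by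
      rcases Nat.eq_zero_or_pos n with hn | hn
      · subst hn
        simp only [hG, if_pos rfl, Nat.cast_zero, mul_zero, add_zero, zero_add, mul_one]
        rw [hT]
        norm_num
      · have hif : (if n = 0 then (0:ℝ) else 1 + Real.log n) = 1 + Real.log n := by
          rw [if_neg hn.ne']
        rw [hG, hif, hT]
        have h1 := log_sub_log hn
        have h2 : N/(lam*((n:ℝ)+1)) ≤ (N/lam) * (Real.log ((n:ℝ)+1) - Real.log n) := by
          have h3 : N/(lam*((n:ℝ)+1)) = (N/lam) * (1/((n:ℝ)+1)) := by
            field_simp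
          rw [h3]
          exact mul_le_mul_of_nonneg_left h1 (by positivity)
        nlinarith [h2]
    -- final assembly
    rw [hPsir]
    have hif2 : (if n + 1 = 0 then (0:ℝ) else 1 + Real.log (n+1:ℕ)) = 1 + Real.log ((n:ℝ)+1) := by
      rw [if_neg (Nat.succ_ne_zero n)]
      push_cast
      rfl
    rw [hif2]
    push_cast
    rw [hexpand] at hS1
    linarith [hpay, hS1, hGstep]


end Digraph'

theorem value_nonuniform_bounds {V : Type} [Fintype V] [DecidableEq V] [Nonempty V]
    (D : Digraph' V) :
    ∃ C : ℝ, 0 < C ∧ ∀ r : V → ℕ, (¬ ∀ u, r u = 0) →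
      (sSup (Set.range fun v => (∑ u ∈ D.outN v, (r u : ℝ)) - ∑ u ∈ D.inN v, (r u : ℝ)))
          ≤ D.value r ∧
      D.value r
        ≤ (sSup (Set.range fun v => (∑ u ∈ D.outN v, (r u : ℝ)) - ∑ u ∈ D.inN v, (r u : ℝ)))
          + C * (((Finset.univ.sup r : ℕ) : ℝ) ^ ((2 : ℝ) / 3)) := by
  classical
  have hN1 : 1 ≤ Fintype.card V := Fintype.card_pos
  set N : ℝ := (Fintype.card V : ℝ) with hNdef
  have hN1' : (1:ℝ) ≤ N := by rw [hNdef]; exact_mod_cast hN1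
  have hNpos : (0:ℝ) < N := lt_of_lt_of_le one_pos hN1'
  have hlogN : 0 ≤ Real.log N := Real.log_nonneg hN1'
  refine ⟨Real.log N + 5*N + N*Real.log N + 1, by nlinarith, ?_⟩
  intro r hr
  have hPhiEq : sSup (Set.range fun v => (∑ u ∈ D.outN v, (r u:ℝ)) - ∑ u ∈ D.inN v, (r u:ℝ))
      = D.Phi (fun u => (r u:ℝ)) := by
    unfold Digraph'.Phi
    congr 1
    ext x
    constructor <;> rintro ⟨v, rfl⟩
    · exact ⟨v, (D.score_eq (fun u => (r u:ℝ)) v).symm⟩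
    · exact ⟨v, D.score_eq (fun u => (r u:ℝ)) v⟩
  constructor
  · rw [hPhiEq]
    exact D.Phi_cast_le_valueAux (∑ u, r u) r rfl
  · set M : ℕ := Finset.univ.sup r with hM
    push_neg at hr
    obtain ⟨u₁, hu₁⟩ := hr
    have hM1 : 1 ≤ M :=
      le_trans (Nat.one_le_iff_ne_zero.mpr hu₁) (Finset.le_sup (mem_univ u₁))
    have hm1 : (1:ℝ) ≤ (M:ℝ) := by exact_mod_cast hM1
    have hmpos : (0:ℝ) < (M:ℝ) := lt_of_lt_of_le one_pos hm1
    set a : ℝ := (M:ℝ) ^ ((1:ℝ)/3) with ha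
    have ha1 : 1 ≤ a := Real.one_le_rpow hm1 (by norm_num)
    have hapos : 0 < a := lt_of_lt_of_le one_pos ha1
    have ha3 : a^3 = (M:ℝ) := by
      rw [ha, ← Real.rpow_natCast ((M:ℝ) ^ ((1:ℝ)/3)) 3, ← Real.rpow_mul hmpos.le]
      norm_num
    have ha2 : ((M:ℝ)) ^ ((2:ℝ)/3) = a^2 := by
      rw [ha, ← Real.rpow_natCast ((M:ℝ) ^ ((1:ℝ)/3)) 2, ← Real.rpow_mul hmpos.le]
      norm_num
    set lam : ℝ := a⁻¹ with hlam
    have hl0 : 0 < lam := by positivity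
    have hl1 : lam ≤ 1 := by rw [hlam]; exact inv_le_one_of_one_le₀ ha1
    have hlama : lam * a = 1 := inv_mul_cancel₀ hapos.ne'
    set n : ℕ := ∑ u, r u with hn
    have hn1 : 1 ≤ n :=
      le_trans (Nat.one_le_iff_ne_zero.mpr hu₁)
        (Finset.single_le_sum (fun u _ => Nat.zero_le _) (mem_univ u₁))
    have hn1' : (1:ℝ) ≤ (n:ℝ) := by exact_mod_cast hn1
    have hnpos : (0:ℝ) < (n:ℝ) := lt_of_lt_of_le one_pos hn1'
    have hnM : (n:ℝ) ≤ N * (M:ℝ) := by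
      have h1 : n ≤ Fintype.card V * M := by
        calc n = ∑ u, r u := hn
          _ ≤ ∑ _u : V, M := Finset.sum_le_sum fun u _ => Finset.le_sup (mem_univ u)
          _ = Fintype.card V * M := by rw [Finset.sum_const, card_univ, smul_eq_mul]
      rw [hNdef]
      exact_mod_cast h1
    have hkey := D.valueAux_le lam hl0 hl1 n r rfl
    rw [if_neg (by omega : ¬ n = 0), ← hNdef] at hkey
    have hv : D.value r = D.valueAux n r := rfl
    set Φ : ℝ := D.Phi (fun u => (r u:ℝ)) with hPhidef
    -- Psi bound
    have hPsiB : D.Psi lam (fun u => (r u:ℝ)) ≤ Real.log N + lam * Φ := by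
      unfold Digraph'.Psi
      have h1 : ∑ v, Real.exp (lam * D.score (fun u => (r u:ℝ)) v)
          ≤ N * Real.exp (lam * Φ) := by
        calc ∑ v, Real.exp (lam * D.score (fun u => (r u:ℝ)) v)
            ≤ ∑ _v : V, Real.exp (lam * Φ) :=
              Finset.sum_le_sum fun v _ => Real.exp_le_exp.mpr
                (mul_le_mul_of_nonneg_left (D.le_Phi _ v) hl0.le)
          _ = N * Real.exp (lam * Φ) := by
              rw [Finset.sum_const, card_univ, nsmul_eq_mul]
      calc Real.log (∑ v, Real.exp (lam * D.score (fun u => (r u:ℝ)) v))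
          ≤ Real.log (N * Real.exp (lam * Φ)) :=
            Real.log_le_log (Finset.sum_pos (fun v _ => Real.exp_pos _) univ_nonempty) h1
        _ = Real.log N + lam * Φ := by
            rw [Real.log_mul hNpos.ne' (Real.exp_pos _).ne', Real.log_exp]
    have h12 : D.Psi lam (fun u => (r u:ℝ)) / lam ≤ Real.log N * a + Φ := by
      have hd : D.Psi lam (fun u => (r u:ℝ)) / lam = D.Psi lam (fun u => (r u:ℝ)) * a := by
        rw [hlam, div_eq_mul_inv, inv_inv]
      rw [hd]
      calc D.Psi lam (fun u => (r u:ℝ)) * a ≤ (Real.log N + lam * Φ) * a :=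
            mul_le_mul_of_nonneg_right hPsiB hapos.le
        _ = Real.log N * a + Φ * (lam * a) := by ring
        _ = Real.log N * a + Φ := by rw [hlama]; ring
    have h6 : lam * (n:ℝ) ≤ N * a^2 := by
      have h1 : lam * (n:ℝ) ≤ lam * (N * (M:ℝ)) := mul_le_mul_of_nonneg_left hnM hl0.le
      have h2 : lam * (N * (M:ℝ)) = N * a^2 := by
        rw [hlam, ← ha3]
        field_simp
      linarith
    have h5 : Real.log (n:ℝ) ≤ Real.log N + 3*a := by
      have h1 : Real.log (n:ℝ) ≤ Real.log (N * (M:ℝ)) := Real.log_le_log hnpos hnM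
      have h2 : Real.log (N * (M:ℝ)) = Real.log N + Real.log (M:ℝ) :=
        Real.log_mul hNpos.ne' hmpos.ne'
      have h3 : Real.log (M:ℝ) = 3 * Real.log a := by
        rw [← ha3, Real.log_pow]; push_cast; ring
      have h4 : Real.log a ≤ a - 1 := by
        have := Real.log_le_sub_one_of_pos hapos
        linarith
      nlinarith
    have h7 : (N/lam) * (1 + Real.log (n:ℝ)) = N * a * (1 + Real.log (n:ℝ)) := by
      rw [hlam, div_eq_mul_inv, inv_inv]
    have h8 : N * a * (1 + Real.log (n:ℝ)) ≤ N * a * (1 + Real.log N + 3*a) :=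
      mul_le_mul_of_nonneg_left (by linarith) (by positivity)
    have haa : a ≤ a^2 := by nlinarith
    -- final
    rw [hPhiEq, ha2, hv]
    have hfin : D.valueAux n r ≤ (Real.log N * a + Φ) + (N * a^2 + N * a * (1 + Real.log N + 3*a)) := by
      have := hkey
      rw [h7] at this
      linarith
    have hexp : N * a * (1 + Real.log N + 3*a) = N * a + N * a * Real.log N + 3 * N * a^2 := by ring
    have h10 : N * a ≤ N * a^2 := by nlinarith
    have h11 : N * a * Real.log N ≤ N * a^2 * Real.log N := by nlinarith
    have h13 : Real.log N * a ≤ Real.log N * a^2 := by nlinarith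
    have hasq : (0:ℝ) ≤ a^2 := sq_nonneg a
    nlinarith [hfin]
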